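/- Fix σ = 10, r = 27, β = 8/3 and let 0 < d ≤ 20. Let p = (−a, −a) with a = √(β(r−1)) = √(208/3). Then the map F_d(x,y) = ((σ/d)(x − β r x/(β + x²)) + 2x − y, x) has a homoclinic point to p: there exists a function u : ℤ → ℝ² with u(0) ≠ p, u(k+1) = F_d(u(k)) for all k ∈ ℤ, and u(k) → p both as k → +∞ and as k → −∞. -/

import Mathlib

open Filter Topology

namespace Stmt11H
open Set
noncomputable section

def aa : ℝ := Real.sqrt (208/3)

def f (x : ℝ) : ℝ := x - 72 * x / (8/3 + x^2)

lemma denom_pos (x : ℝ) : 0 < 8/3 + x^2 := by positivity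

lemma aa_sq : aa^2 = 208/3 := Real.sq_sqrt (by norm_num)
lemma aa_pos : 0 < aa := Real.sqrt_pos.2 (by norm_num)
lemma aa_lt : aa < 2061/236 := by nlinarith [aa_sq, aa_pos]
lemma aa_gt : 3/2 < aa := by nlinarith [aa_sq, aa_pos]

lemma f_eq (x : ℝ) : f x = x * (x^2 - 208/3) / (8/3 + x^2) := by
  have h := (denom_pos x).ne'
  rw [f, eq_div_iff h, sub_mul, div_mul_cancel₀ _ h]
  ring

lemma f_cont : Continuous f := by
  unfold f
  exact continuous_id.sub (Continuous.div (by continuity) (by continuity)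
    (fun x => (denom_pos x).ne'))

lemma f_neg (x : ℝ) (h0 : 0 < x) (h1 : x < aa) : f x < 0 := by
  rw [f_eq]
  apply div_neg_of_neg_of_pos _ (denom_pos x)
  have hx2 : x^2 < 208/3 := by nlinarith [aa_sq, mul_pos (sub_pos.2 h1) (add_pos aa_pos h0)]
  nlinarith

lemma f_nonpos (x : ℝ) (h0 : 0 ≤ x) (h1 : x < aa) : f x ≤ 0 := by
  rcases eq_or_lt_of_le h0 with h | h
  · rw [f_eq, ← h]; norm_num
  · exact le_of_lt (f_neg x h h1)

lemma f_aa : f aa = 0 := by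
  rw [f_eq, aa_sq]; norm_num

lemma f_neg_aa : f (-aa) = 0 := by
  rw [f_eq, show (-aa)^2 = aa^2 by ring, aa_sq]; norm_num

lemma f_pos_imp (x : ℝ) (hge : -aa ≤ x) (hlt : x < aa) (hf : 0 < f x) :
    -aa < x ∧ x < 0 := by
  rw [f_eq] at hf
  have hd := denom_pos x
  have hnum : 0 < x * (x^2 - 208/3) := by
    rcases div_pos_iff.mp hf with ⟨h1, _⟩ | ⟨_, h2⟩
    · exact h1
    · linarith
  constructor
  · rcases eq_or_lt_of_le hge with h | h
    · exfalso
      rw [← h, show (-aa)^2 = aa^2 by ring, aa_sq] at hnum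
      norm_num at hnum
    · exact h
  · by_contra h
    push_neg at h
    have hx2 : x^2 < 208/3 := by
      nlinarith [aa_sq, mul_pos (sub_pos.2 hlt) (add_pos_of_pos_of_nonneg aa_pos h)]
    nlinarith [mul_nonpos_of_nonneg_of_nonpos h (le_of_lt (sub_neg.mpr hx2))]

lemma f_32 : f (3/2) = -(2415/118) := by
  rw [f]; norm_num

lemma f_neg32 : f (-(3/2)) = 2415/118 := by
  rw [f]; norm_num

def X (c s : ℝ) : ℕ → ℝ
  | 0 => s
  | 1 => s + c * f s
  | (n+2) => 2 * X c s (n+1) - X c s n + c * f (X c s (n+1))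

lemma X_zero (c s : ℝ) : X c s 0 = s := rfl
lemma X_one (c s : ℝ) : X c s 1 = s + c * f s := rfl
lemma X_rec (c s : ℝ) (n : ℕ) :
    X c s (n+2) = 2 * X c s (n+1) - X c s n + c * f (X c s (n+1)) := rfl

lemma X_cont (c : ℝ) : ∀ n, Continuous (fun s => X c s n) := by
  intro n
  induction n using Nat.strong_induction_on with
  | _ n ih =>
    match n with
    | 0 => exact continuous_id
    | 1 =>
      show Continuous fun s => s + c * f s
      exact continuous_id.add (continuous_const.mul f_cont)
    | (m+2) =>
      have h1 := ih (m+1) (by omega)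
      have h0 := ih m (by omega)
      show Continuous fun s => 2 * X c s (m+1) - X c s m + c * f (X c s (m+1))
      exact ((continuous_const.mul h1).sub h0).add
        (continuous_const.mul (f_cont.comp h1))

def C (c s : ℝ) (k : ℕ) : Prop := -aa ≤ X c s (k+1) ∧ X c s (k+1) ≤ X c s k

def SA (c : ℝ) : Set ℝ := {s | ∃ j, (∀ i < j, C c s i) ∧ X c s (j+1) < -aa}
def SB (c : ℝ) : Set ℝ := {s | ∃ j, (∀ i < j, C c s i) ∧ X c s j < X c s (j+1)}

lemma X_le_s (c s : ℝ) {j : ℕ} (hpre : ∀ i < j, C c s i) :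
    ∀ k, k ≤ j → X c s k ≤ s := by
  intro k
  induction k with
  | zero => intro _; exact le_of_eq (X_zero c s)
  | succ m ihm =>
    intro hmj
    have h1 := (hpre m (by omega)).2
    have h2 := ihm (by omega)
    linarith

lemma not_mem_both (c s : ℝ) (hs : -aa ≤ s) : ¬(s ∈ SA c ∧ s ∈ SB c) := by
  rintro ⟨⟨ja, hpa, hxa⟩, ⟨jb, hpb, hxb⟩⟩
  rcases lt_trichotomy ja jb with h | h | h
  · exact absurd (hpb ja h).1 (not_le.2 hxa)
  · subst h
    have hja : -aa ≤ X c s ja := by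
      match ja with
      | 0 => exact hs
      | (m+1) => exact (hpa m (by omega)).1
    linarith
  · exact absurd (hpa jb h).2 (not_le.2 hxb)

lemma prefix_strict (c s : ℝ) (hc : 0 < c) (hs0 : 0 < s) (hsa : s < aa) {j : ℕ}
    (hpre : ∀ i < j, C c s i) : ∀ i, i + 1 < j → X c s (i+1) < X c s i := by
  intro i
  induction i using Nat.strong_induction_on with
  | _ i ih =>
    intro hij
    have hCi := hpre i (by omega)
    rcases lt_or_eq_of_le hCi.2 with h | h
    · exact h
    exfalso
    match i, hij with
    | 0, hij =>
      have h1 : X c s 1 = X c s 0 := h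
      rw [X_one, X_zero] at h1
      have := f_neg s hs0 hsa
      nlinarith
    | (m+1), hij =>
      have hrec := X_rec c s m
      have hm : X c s (m+1) < X c s m := ih m (by omega) (by omega)
      have heq : X c s (m+2) = X c s (m+1) := h
      have hfv : 0 < f (X c s (m+1)) := by
        have hcf : c * f (X c s (m+1)) = X c s m - X c s (m+1) := by linarith
        nlinarith
      have hb1 : -aa ≤ X c s (m+1) := (hpre m (by omega)).1
      have hb2 : X c s (m+1) < aa :=
        lt_of_le_of_lt (X_le_s c s hpre (m+1) (by omega)) hsa
      have hC2 := (hpre (m+2) (by omega)).2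
      have hrec2 := X_rec c s (m+1)
      rw [heq] at hrec2
      have hpos : 0 < c * f (X c s (m+1)) := mul_pos hc hfv
      -- hrec2 : X (m+3) = 2 * X (m+1) - X (m+1) + c * f (X (m+1))
      have : X c s (m+2+1) = X c s (m+1) + c * f (X c s (m+1)) := by
        rw [hrec2]; ring
      rw [heq] at hC2
      linarith

lemma strictA (c s : ℝ) (hc : 0 < c) (hs0 : 0 < s) (hsa : s < aa) {j : ℕ}
    (hpre : ∀ i < j, C c s i) (hxa : X c s (j+1) < -aa) :
    ∀ i, i + 1 ≤ j → X c s (i+1) < X c s i := by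
  intro i hij
  rcases lt_or_eq_of_le hij with hlt | heqj
  · exact prefix_strict c s hc hs0 hsa hpre i hlt
  -- i + 1 = j
  rcases lt_or_eq_of_le (hpre i (by omega)).2 with h | h
  · exact h
  exfalso
  match i, heqj with
  | 0, heqj =>
    have h1 : X c s 1 = X c s 0 := h
    rw [X_one, X_zero] at h1
    have := f_neg s hs0 hsa
    nlinarith
  | (m+1), heqj =>
    have hrec := X_rec c s m
    have hm : X c s (m+1) < X c s m :=
      prefix_strict c s hc hs0 hsa hpre m (by omega)
    have heq : X c s (m+2) = X c s (m+1) := h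
    have hfv : 0 < f (X c s (m+1)) := by
      have hcf : c * f (X c s (m+1)) = X c s m - X c s (m+1) := by linarith
      nlinarith
    have hb1 : -aa ≤ X c s (m+1) := (hpre m (by omega)).1
    have hb2 : X c s (m+1) < aa :=
      lt_of_le_of_lt (X_le_s c s hpre (m+1) (by omega)) hsa
    obtain ⟨hv1, _⟩ := f_pos_imp _ hb1 hb2 hfv
    have hrec2 := X_rec c s (m+1)
    rw [heq] at hrec2
    have hxa' : X c s (m+2+1) < -aa := by rw [← heqj] at hxa; exact_mod_cast hxa
    have hpos : 0 < c * f (X c s (m+1)) := mul_pos hc hfv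
    have : X c s (m+2+1) = X c s (m+1) + c * f (X c s (m+1)) := by rw [hrec2]; ring
    linarith

lemma lowA (c s : ℝ) (hc : 0 < c) (hs0 : 0 < s) (hsa : s < aa) {j : ℕ}
    (hpre : ∀ i < j, C c s i) (hxa : X c s (j+1) < -aa) :
    ∀ k, 1 ≤ k → k < j → -aa < X c s k := by
  intro k h1 hk
  match k, h1 with
  | (m+1), _ =>
    rcases lt_or_eq_of_le (hpre m (by omega)).1 with h | h
    · exact h
    exfalso
    have hstr : X c s (m+1+1) < X c s (m+1) :=
      strictA c s hc hs0 hsa hpre hxa (m+1) (by omega)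
    have hge := (hpre (m+1) hk).1
    linarith

lemma extB (c s : ℝ) (hc : 0 < c) (hs0 : 0 < s) (hsa : s < aa) {j : ℕ}
    (hpre : ∀ i < j, C c s i) (hxb : X c s j < X c s (j+1)) :
    ∀ m, j = m + 1 →
      X c s (m+1) < X c s m ∨
      (X c s (m+1) = X c s m ∧ -aa < X c s (m+1) ∧ X c s (m+1) < 0) := by
  intro m hjm
  rcases lt_or_eq_of_le (hpre m (by omega)).2 with h | h
  · exact Or.inl h
  right
  refine ⟨h, ?_⟩
  match m with
  | 0 =>
    exfalso
    have h1 : X c s 1 = X c s 0 := h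
    rw [X_one, X_zero] at h1
    have := f_neg s hs0 hsa
    nlinarith
  | (m'+1) =>
    have hrec := X_rec c s m'
    have hm : X c s (m'+1) < X c s m' :=
      prefix_strict c s hc hs0 hsa hpre m' (by omega)
    have heq : X c s (m'+2) = X c s (m'+1) := h
    have hfv : 0 < f (X c s (m'+1)) := by
      have hcf : c * f (X c s (m'+1)) = X c s m' - X c s (m'+1) := by linarith
      nlinarith
    have hb1 : -aa ≤ X c s (m'+1) := (hpre m' (by omega)).1
    have hb2 : X c s (m'+1) < aa :=
      lt_of_le_of_lt (X_le_s c s hpre (m'+1) (by omega)) hsa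
    obtain ⟨hv1, hv2⟩ := f_pos_imp _ hb1 hb2 hfv
    rw [heq]
    exact ⟨hv1, hv2⟩

lemma lowB (c s : ℝ) (hc : 0 < c) (hs0 : 0 < s) (hsa : s < aa) {j : ℕ}
    (hpre : ∀ i < j, C c s i) (hxb : X c s j < X c s (j+1)) :
    ∀ k, 1 ≤ k → k ≤ j → -aa < X c s k := by
  intro k h1 hk
  match k, h1 with
  | (m+1), _ =>
    rcases lt_or_eq_of_le (hpre m (by omega)).1 with h | h
    · exact h
    exfalso
    -- X c s (m+1) = -aa
    rcases lt_or_eq_of_le hk with hlt | heqj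
    · -- m+1 < j
      rcases Nat.lt_or_ge (m+1+1) j with h2 | h2
      · have hstr := prefix_strict c s hc hs0 hsa hpre (m+1) h2
        have hge := (hpre (m+1) hlt).1
        linarith
      · -- m+2 = j
        have hj : j = (m+1) + 1 := by omega
        rcases extB c s hc hs0 hsa hpre hxb (m+1) hj with hcase | hcase
        · -- X (m+2) < X (m+1) = -aa, but C (m+1) : -aa ≤ X (m+2)
          have hge := (hpre (m+1) hlt).1
          linarith
        · linarith [hcase.2.1]
    · -- k = j, X c s j = -aa
      have hj : ∃ m', j = m' + 1 := ⟨m, heqj.symm⟩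
      obtain ⟨m', hjm⟩ := hj
      rcases extB c s hc hs0 hsa hpre hxb m' hjm with hcase | hcase
      · -- X j < X (j-1), X j = -aa ⇒ X (j+1) < X j contradicting hxb
        have hm'm : m' = m := by omega
        have hXj : X c s (m'+1) = -aa := by rw [hm'm]; exact h.symm
        have hrec := X_rec c s m'
        have hf0 : f (X c s (m'+1)) = 0 := by rw [hXj]; exact f_neg_aa
        have hxb' : X c s (m'+1) < X c s (m'+2) := by
          rw [hjm] at hxb; exact_mod_cast hxb
        rw [hf0] at hrec
        -- X (m'+2) = 2 X(m'+1) - X m' + 0 = X(m'+1) + (X(m'+1) - X m') < X(m'+1)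
        have : X c s (m'+2) < X c s (m'+1) := by
          have := hcase  -- X (m'+1) < X m'
          linarith [hrec]
        linarith
      · have hm'm : m' = m := by omega
        have hXj : X c s (m'+1) = -aa := by rw [hm'm]; exact h.symm
        linarith [hcase.2.1]
lemma eventually_forall_lt {P : ℕ → ℝ → Prop} {s : ℝ} {j : ℕ}
    (h : ∀ i, i < j → ∀ᶠ s' in 𝓝 s, P i s') :
    ∀ᶠ s' in 𝓝 s, ∀ i, i < j → P i s' := by
  induction j with
  | zero => exact Filter.Eventually.of_forall (by omega)
  | succ m ih =>
    have h1 := ih (fun i hi => h i (by omega))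
    have h2 := h m (by omega)
    filter_upwards [h1, h2] with s' hs1 hs2 i hi
    rcases Nat.lt_or_ge i m with h' | h'
    · exact hs1 i h'
    · have hi' : i = m := by omega
      subst hi'; exact hs2

lemma ev_lt {s : ℝ} {g h : ℝ → ℝ} (hg : Continuous g) (hh : Continuous h)
    (hlt : g s < h s) : ∀ᶠ s' in 𝓝 s, g s' < h s' :=
  (isOpen_lt hg hh).mem_nhds hlt

lemma first_failure (c s : ℝ) (hex : ∃ jj, ¬ C c s jj) :
    ∃ j, (∀ i < j, C c s i) ∧ ¬ C c s j := by
  classical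
  exact ⟨Nat.find hex, fun i hi => of_not_not (Nat.find_min hex hi), Nat.find_spec hex⟩

lemma SA_mem_nhds (c s : ℝ) (hc : 0 < c) (hs0 : 0 < s) (hsa : s < aa)
    (hmem : s ∈ SA c) : ∀ᶠ s' in 𝓝 s, s' ∈ SA c := by
  have hsge : -aa ≤ s := le_of_lt (lt_trans (neg_neg_iff_pos.mpr aa_pos) hs0)
  have hnB : s ∉ SB c := fun hB => not_mem_both c s hsge ⟨hmem, hB⟩
  obtain ⟨j0, hp0, hx0⟩ := hmem
  obtain ⟨j, hpre, hfail⟩ := first_failure c s ⟨j0, fun hC => absurd hC.1 (not_le.2 hx0)⟩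
  have htype : X c s (j+1) < -aa := by
    by_contra hh
    push_neg at hh
    rcases not_and_or.mp hfail with h | h
    · exact h hh
    · exact hnB ⟨j, hpre, not_le.mp h⟩
  have hstr := strictA c s hc hs0 hsa hpre htype
  have hlow := lowA c s hc hs0 hsa hpre htype
  have ev1 : ∀ᶠ s' in 𝓝 s, ∀ i, i < j → X c s' (i+1) < X c s' i :=
    eventually_forall_lt (fun i hi =>
      ev_lt (X_cont c (i+1)) (X_cont c i) (hstr i (by omega)))
  have ev2 : ∀ᶠ s' in 𝓝 s, ∀ i, i < j - 1 → -aa < X c s' (i+1) :=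
    eventually_forall_lt (fun i hi =>
      ev_lt continuous_const (X_cont c (i+1)) (hlow (i+1) (by omega) (by omega)))
  have ev3 : ∀ᶠ s' in 𝓝 s, X c s' (j+1) < -aa :=
    ev_lt (X_cont c (j+1)) continuous_const htype
  filter_upwards [ev1, ev2, ev3] with s' h1 h2 h3
  rcases Nat.eq_zero_or_pos j with hj0 | hj1
  · exact ⟨j, fun i hi => absurd hi (by omega), h3⟩
  by_cases hbr : -aa ≤ X c s' j
  · refine ⟨j, fun i hi => ⟨?_, le_of_lt (h1 i hi)⟩, h3⟩
    rcases Nat.lt_or_ge i (j-1) with h' | h'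
    · exact le_of_lt (h2 i h')
    · have hij : i + 1 = j := by omega
      rw [hij]; exact hbr
  · push_neg at hbr
    refine ⟨j - 1, fun i hi => ⟨le_of_lt (h2 i hi), le_of_lt (h1 i (by omega))⟩, ?_⟩
    have hj : j - 1 + 1 = j := by omega
    rw [hj]; exact hbr

lemma SB_mem_nhds (c s : ℝ) (hc : 0 < c) (hs0 : 0 < s) (hsa : s < aa)
    (hmem : s ∈ SB c) : ∀ᶠ s' in 𝓝 s, s' ∈ SB c := by
  have hsge : -aa ≤ s := le_of_lt (lt_trans (neg_neg_iff_pos.mpr aa_pos) hs0)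
  have hnA : s ∉ SA c := fun hA => not_mem_both c s hsge ⟨hA, hmem⟩
  obtain ⟨j0, hp0, hx0⟩ := hmem
  obtain ⟨j, hpre, hfail⟩ := first_failure c s ⟨j0, fun hC => absurd hC.2 (not_le.2 hx0)⟩
  have htype : X c s j < X c s (j+1) := by
    rcases not_and_or.mp hfail with h | h
    · exact absurd ⟨j, hpre, not_le.mp h⟩ hnA
    · exact not_le.mp h
  have hj1 : 1 ≤ j := by
    by_contra hh
    have hj0 : j = 0 := by omega
    rw [hj0, X_zero, X_one] at htype
    have := f_neg s hs0 hsa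
    nlinarith
  obtain ⟨m, hjm⟩ : ∃ m, j = m + 1 := ⟨j - 1, by omega⟩
  have hstr := prefix_strict c s hc hs0 hsa hpre
  have hlow := lowB c s hc hs0 hsa hpre htype
  have ev1 : ∀ᶠ s' in 𝓝 s, ∀ i, i < m → X c s' (i+1) < X c s' i :=
    eventually_forall_lt (fun i hi => ev_lt (X_cont c (i+1)) (X_cont c i)
      (hstr i (by omega)))
  have ev2 : ∀ᶠ s' in 𝓝 s, ∀ i, i < j → -aa < X c s' (i+1) :=
    eventually_forall_lt (fun i hi =>
      ev_lt continuous_const (X_cont c (i+1)) (hlow (i+1) (by omega) (by omega)))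
  have ev3 : ∀ᶠ s' in 𝓝 s, X c s' j < X c s' (j+1) :=
    ev_lt (X_cont c j) (X_cont c (j+1)) htype
  rcases extB c s hc hs0 hsa hpre htype m hjm with hcase | hcase
  · have ev4 : ∀ᶠ s' in 𝓝 s, X c s' (m+1) < X c s' m :=
      ev_lt (X_cont c (m+1)) (X_cont c m) hcase
    filter_upwards [ev1, ev2, ev3, ev4] with s' h1 h2 h3 h4
    refine ⟨j, fun i hi => ⟨h2 i hi |>.le, ?_⟩, h3⟩
    rcases Nat.lt_or_ge i m with h' | h'
    · exact (h1 i h').le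
    · have hi' : i = m := by omega
      subst hi'; exact h4.le
  · have ev5 : ∀ᶠ s' in 𝓝 s, -aa < X c s' m :=
      ev_lt continuous_const (X_cont c m) (hcase.1 ▸ hcase.2.1)
    filter_upwards [ev1, ev2, ev3, ev5] with s' h1 h2 h3 h5
    by_cases hbr : X c s' (m+1) ≤ X c s' m
    · refine ⟨j, fun i hi => ⟨h2 i hi |>.le, ?_⟩, h3⟩
      rcases Nat.lt_or_ge i m with h' | h'
      · exact (h1 i h').le
      · have hi' : i = m := by omega
        subst hi'; exact hbr
    · push_neg at hbr
      refine ⟨m, fun i hi => ⟨?_, (h1 i hi).le⟩, hbr⟩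
      rcases Nat.eq_zero_or_pos m with hm0 | hm1
      · omega
      · exact (h2 i (by omega)).le

lemma coverage (c s : ℝ) (hnA : s ∉ SA c) (hnB : s ∉ SB c) : ∀ k, C c s k := by
  by_contra h
  push_neg at h
  obtain ⟨j, hpre, hfail⟩ := first_failure c s h
  rcases not_and_or.mp hfail with h' | h'
  · exact hnA ⟨j, hpre, not_le.mp h'⟩
  · exact hnB ⟨j, hpre, not_le.mp h'⟩

lemma X_tendsto (c s : ℝ) (hc : 0 < c) (hs0 : 0 < s) (hsa : s < aa)
    (hC : ∀ k, C c s k) : Tendsto (X c s) atTop (𝓝 (-aa)) := by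
  have hanti : Antitone (X c s) := antitone_nat_of_succ_le (fun k => (hC k).2)
  have hbdd : BddBelow (Set.range (X c s)) := by
    refine ⟨-aa, ?_⟩
    rintro _ ⟨k, rfl⟩
    match k with
    | 0 => rw [X_zero]; nlinarith [aa_pos]
    | (m+1) => exact (hC m).1
  have hlim := tendsto_atTop_ciInf hanti hbdd
  set L := ⨅ k, X c s k with hL
  have hLle : ∀ k, L ≤ X c s k := fun k => ciInf_le hbdd k
  have hLs : L ≤ s := by have := hLle 0; rwa [X_zero] at this
  have hgeL : -aa ≤ L := by
    refine le_ciInf (fun k => ?_)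
    match k with
    | 0 => rw [X_zero]; nlinarith [aa_pos]
    | (m+1) => exact (hC m).1
  have hlim1 : Tendsto (fun k => X c s (k+1)) atTop (𝓝 L) :=
    hlim.comp (tendsto_add_atTop_nat 1)
  have hlim2 : Tendsto (fun k => X c s (k+2)) atTop (𝓝 L) :=
    hlim.comp (tendsto_add_atTop_nat 2)
  have hfL : c * f L = 0 := by
    have h2 : Tendsto (fun k => c * f (X c s (k+1))) atTop (𝓝 (c * f L)) :=
      tendsto_const_nhds.mul ((f_cont.tendsto L).comp hlim1)
    have h3 : (fun k => c * f (X c s (k+1)))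
        = fun k => X c s (k+2) - 2 * X c s (k+1) + X c s k := by
      funext k
      rw [X_rec c s k]; ring
    rw [h3] at h2
    have h4 : Tendsto (fun k => X c s (k+2) - 2 * X c s (k+1) + X c s k)
        atTop (𝓝 (L - 2 * L + L)) :=
      (hlim2.sub (tendsto_const_nhds.mul hlim1)).add hlim
    have := tendsto_nhds_unique h2 h4
    linarith
  have hfL0 : f L = 0 := by
    rcases mul_eq_zero.mp hfL with h | h
    · exact absurd h (ne_of_gt hc)
    · exact h
  have hLaa : L < aa := lt_of_le_of_lt hLs hsa
  have hcase : L = -aa ∨ L = 0 := by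
    have h5 := f_eq L
    rw [hfL0] at h5
    have h6 := (denom_pos L).ne'
    field_simp at h5
    rcases mul_eq_zero.mp (by linarith [h5] : L * (L^2*3 - 208) = 0) with h | h
    · exact Or.inr h
    · left
      have hsq : L^2 = 208/3 := by linarith
      have : (L - aa) * (L + aa) = 0 := by nlinarith [aa_sq]
      rcases mul_eq_zero.mp this with h' | h'
      · exfalso; nlinarith
      · linarith
  rcases hcase with h | h
  · rwa [h] at hlim
  · exfalso
    -- L = 0 : derive contradiction
    have hX0 : ∀ k, 0 ≤ X c s k := fun k => h ▸ hLle k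
    have hXlt : ∀ k, X c s k < aa := fun k =>
      lt_of_le_of_lt (le_trans (hanti (Nat.zero_le k)) (le_of_eq (X_zero c s))) hsa
    have hfnp : ∀ k, f (X c s (k+1)) ≤ 0 := fun k => f_nonpos _ (hX0 _) (hXlt _)
    have hδanti : Antitone (fun k => X c s (k+1) - X c s k) := by
      apply antitone_nat_of_succ_le
      intro k
      have hr := X_rec c s k
      have : c * f (X c s (k+1)) ≤ 0 :=
        mul_nonpos_of_nonneg_of_nonpos hc.le (hfnp k)
      show X c s (k+2) - X c s (k+1) ≤ X c s (k+1) - X c s k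
      linarith
    have hδ : Tendsto (fun k => X c s (k+1) - X c s k) atTop (𝓝 0) := by
      have := hlim1.sub hlim
      simpa using this
    have h0le : (0:ℝ) ≤ X c s 1 - X c s 0 := by
      apply le_of_tendsto hδ
      filter_upwards [eventually_ge_atTop 0] with k hk
      exact hδanti (Nat.zero_le k)
    rw [X_zero, X_one] at h0le
    have := f_neg s hs0 hsa
    nlinarith

lemma exists_good (c : ℝ) (hc : 1/2 ≤ c) :
    ∃ s, 3/2 ≤ s ∧ s < aa ∧ Tendsto (X c s) atTop (𝓝 (-aa)) := by
  have hc0 : (0:ℝ) < c := lt_of_lt_of_le (by norm_num) hc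
  have h32aa : (3/2 : ℝ) ≤ aa := le_of_lt aa_gt
  -- X c (3/2) 1 is very negative
  have h32 : X c (3/2) 1 ≤ -(2061/236) := by
    rw [X_one, f_32]
    nlinarith
  have haa1 : X c aa 1 = aa := by rw [X_one, f_aa]; ring
  -- IVT to find sb with X c sb 1 = -3/2
  have hivt : ∃ sb ∈ Icc (3/2 : ℝ) aa, X c sb 1 = -(3/2) := by
    have hcont : ContinuousOn (fun s => X c s 1) (Icc (3/2 : ℝ) aa) :=
      (X_cont c 1).continuousOn
    have hmem : (-(3/2) : ℝ) ∈ Icc (X c (3/2) 1) (X c aa 1) := by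
      constructor
      · linarith [h32]
      · rw [haa1]; linarith [aa_gt]
    have := intermediate_value_Icc h32aa hcont hmem
    exact this
  obtain ⟨sb, hsbI, hsb1⟩ := hivt
  have hsb_lt : sb < aa := by
    rcases lt_or_eq_of_le hsbI.2 with h | h
    · exact h
    · exfalso; rw [h, haa1] at hsb1; nlinarith [aa_pos]
  have hsb0 : (0:ℝ) < sb := by linarith [hsbI.1]
  -- 3/2 ∈ SA
  have hA32 : (3/2 : ℝ) ∈ SA c := by
    refine ⟨0, fun i hi => absurd hi (by omega), ?_⟩
    calc X c (3/2) 1 ≤ -(2061/236) := h32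
    _ < -aa := by linarith [aa_lt]
  -- sb ∈ SB
  have hBsb : sb ∈ SB c := by
    refine ⟨1, ?_, ?_⟩
    · intro i hi
      have hi0 : i = 0 := by omega
      subst hi0
      constructor
      · rw [hsb1]; linarith [aa_gt]
      · rw [hsb1, X_zero]; linarith [hsbI.1]
    · have hrec : X c sb 2 = 2 * X c sb 1 - X c sb 0 + c * f (X c sb 1) :=
        X_rec c sb 0
      rw [hsb1, X_zero, f_neg32] at hrec
      rw [hsb1]
      show -(3/2 : ℝ) < X c sb 2
      rw [hrec]
      nlinarith [aa_lt, hsbI.2]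
  -- connectedness argument
  by_contra hno
  push_neg at hno
  have hsub : Icc (3/2:ℝ) sb ⊆ (SA c ∩ Ioo 0 aa) ∪ (SB c ∩ Ioo 0 aa) := by
    intro x hx
    have hx0 : (0:ℝ) < x := by linarith [hx.1]
    have hxa : x < aa := lt_of_le_of_lt hx.2 hsb_lt
    by_cases hA : x ∈ SA c
    · exact Or.inl ⟨hA, hx0, hxa⟩
    by_cases hB : x ∈ SB c
    · exact Or.inr ⟨hB, hx0, hxa⟩
    exact absurd (X_tendsto c x hc0 hx0 hxa (coverage c x hA hB)) (hno x hx.1 hxa)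
  have hOA : IsOpen (SA c ∩ Ioo 0 aa) := by
    rw [isOpen_iff_mem_nhds]
    rintro x ⟨hx, hx0, hxa⟩
    exact Filter.inter_mem (SA_mem_nhds c x hc0 hx0 hxa hx)
      (isOpen_Ioo.mem_nhds ⟨hx0, hxa⟩)
  have hOB : IsOpen (SB c ∩ Ioo 0 aa) := by
    rw [isOpen_iff_mem_nhds]
    rintro x ⟨hx, hx0, hxa⟩
    exact Filter.inter_mem (SB_mem_nhds c x hc0 hx0 hxa hx)
      (isOpen_Ioo.mem_nhds ⟨hx0, hxa⟩)
  have hpc : IsPreconnected (Icc (3/2:ℝ) sb) := isPreconnected_Icc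
  obtain ⟨x, hxI, hxmem⟩ := hpc _ _ hOA hOB hsub
    ⟨3/2, ⟨le_refl _, hsbI.1⟩, hA32, by norm_num, aa_gt⟩
    ⟨sb, ⟨hsbI.1, le_refl _⟩, hBsb, hsb0, hsb_lt⟩
  exact not_mem_both c x (by nlinarith [aa_pos, hxI.1]) ⟨hxmem.1.1, hxmem.2.1⟩

def Y (c s : ℝ) : ℤ → ℝ
  | .ofNat n => X c s n
  | .negSucc n => X c s n

lemma Y_ofNat (c s : ℝ) (n : ℕ) : Y c s (Int.ofNat n) = X c s n := rfl
lemma Y_negSucc (c s : ℝ) (n : ℕ) : Y c s (Int.negSucc n) = X c s n := rfl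

lemma Y_rec (c s : ℝ) (k : ℤ) :
    Y c s (k+1) = c * f (Y c s k) + 2 * Y c s k - Y c s (k-1) := by
  match k with
  | .ofNat 0 =>
    have e1 : ((Int.ofNat 0) + 1) = Int.ofNat 1 := by rfl
    have e2 : ((Int.ofNat 0) - 1) = Int.negSucc 0 := by rfl
    rw [e1, e2, Y_ofNat, Y_ofNat, Y_negSucc, X_one, X_zero]
    ring
  | .ofNat (n+1) =>
    have e1 : ((Int.ofNat (n+1)) + 1) = Int.ofNat (n+2) := by
      rw [Int.ofNat_eq_coe, Int.ofNat_eq_coe]; push_cast; ring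
    have e2 : ((Int.ofNat (n+1)) - 1) = Int.ofNat n := by
      rw [Int.ofNat_eq_coe, Int.ofNat_eq_coe]; push_cast; ring
    rw [e1, e2, Y_ofNat, Y_ofNat, Y_ofNat, X_rec c s n]
    ring
  | .negSucc 0 =>
    have e1 : ((Int.negSucc 0) + 1) = Int.ofNat 0 := by rfl
    have e2 : ((Int.negSucc 0) - 1) = Int.negSucc 1 := by rfl
    rw [e1, e2, Y_ofNat, Y_negSucc, Y_negSucc, X_zero, X_one]
    ring
  | .negSucc (n+1) =>
    have e1 : ((Int.negSucc (n+1)) + 1) = Int.negSucc n := by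
      rw [Int.negSucc_eq, Int.negSucc_eq]; push_cast; ring
    have e2 : ((Int.negSucc (n+1)) - 1) = Int.negSucc (n+2) := by
      rw [Int.negSucc_eq, Int.negSucc_eq]; push_cast; ring
    rw [e1, e2, Y_negSucc, Y_negSucc, Y_negSucc, X_rec c s n]
    ring

lemma tendsto_toNat : Tendsto Int.toNat atTop atTop :=
  tendsto_atTop_atTop.2 (fun b => ⟨(b : ℤ), fun k hk => by omega⟩)

lemma tendsto_negtoNat : Tendsto (fun k : ℤ => (-1 - k).toNat) atBot atTop := by
  rw [tendsto_atTop]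
  intro b
  filter_upwards [eventually_le_atBot (-(b:ℤ) - 1)] with k hk
  omega

lemma Y_tendsto_top (c s : ℝ) (h : Tendsto (X c s) atTop (𝓝 (-aa))) :
    Tendsto (Y c s) atTop (𝓝 (-aa)) := by
  apply Tendsto.congr' _ (h.comp tendsto_toNat)
  filter_upwards [eventually_ge_atTop (0:ℤ)] with k hk
  match k, hk with
  | .ofNat n, _ => rfl

lemma Y_tendsto_bot (c s : ℝ) (h : Tendsto (X c s) atTop (𝓝 (-aa))) :
    Tendsto (Y c s) atBot (𝓝 (-aa)) := by
  apply Tendsto.congr' _ (h.comp tendsto_negtoNat)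
  filter_upwards [eventually_le_atBot (-1 : ℤ)] with k hk
  match k, hk with
  | .ofNat n, hk =>
    exfalso
    rw [Int.ofNat_eq_coe] at hk
    omega
  | .negSucc n, _ =>
    show X c s ((-1 - Int.negSucc n).toNat) = Y c s (Int.negSucc n)
    rw [Y_negSucc]
    congr 1
    rw [Int.negSucc_eq]
    omega

end
end Stmt11H

open Stmt11H in
theorem stmt11 (d : ℝ) (hd0 : 0 < d) (hd20 : d ≤ 20)
    (F : ℝ × ℝ → ℝ × ℝ)
    (hF : ∀ x y : ℝ,
      F (x, y) = ((10 / d) * (x - (8 / 3) * 27 * x / (8 / 3 + x ^ 2)) + 2 * x - y, x)) :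
    ∃ u : ℤ → ℝ × ℝ,
      u 0 ≠ (-Real.sqrt (208 / 3), -Real.sqrt (208 / 3)) ∧
      (∀ k : ℤ, u (k + 1) = F (u k)) ∧
      Tendsto u atTop (𝓝 (-Real.sqrt (208 / 3), -Real.sqrt (208 / 3))) ∧
      Tendsto u atBot (𝓝 (-Real.sqrt (208 / 3), -Real.sqrt (208 / 3))) := by
  set c : ℝ := 10 / d with hc_def
  have hc : (1/2 : ℝ) ≤ c := by
    rw [hc_def, le_div_iff₀ hd0]
    linarith
  obtain ⟨s, hs32, hsa, htend⟩ := exists_good c hc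
  refine ⟨fun k => (Y c s k, Y c s (k-1)), ?_, ?_, ?_, ?_⟩
  · -- u 0 ≠ p
    intro h
    have h1 : Y c s 0 = -Real.sqrt (208/3) := congrArg Prod.fst h
    have h2 : Y c s 0 = s := by rw [show (0:ℤ) = Int.ofNat 0 from rfl, Y_ofNat, X_zero]
    have := Real.sqrt_nonneg (208/3 : ℝ)
    rw [h2] at h1
    linarith
  · -- orbit property
    intro k
    rw [hF (Y c s k) (Y c s (k-1))]
    have hfst : Y c s (k+1) =
        (10 / d) * (Y c s k - (8/3) * 27 * Y c s k / (8/3 + (Y c s k)^2))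
          + 2 * Y c s k - Y c s (k-1) := by
      rw [Y_rec c s k]
      have : c * f (Y c s k) =
          (10 / d) * (Y c s k - (8/3) * 27 * Y c s k / (8/3 + (Y c s k)^2)) := by
        rw [hc_def, f]
        ring_nf
      linarith [this]
    have hsnd : Y c s (k+1-1) = Y c s k := by norm_num
    rw [← hfst]
    refine Prod.ext rfl ?_
    show Y c s (k+1-1) = Y c s k
    exact hsnd
  · -- atTop
    have haaeq : -aa = -Real.sqrt (208/3) := rfl
    have h1 : Tendsto (fun k : ℤ => Y c s k) atTop (𝓝 (-Real.sqrt (208/3))) :=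
      haaeq ▸ Y_tendsto_top c s htend
    have h2 : Tendsto (fun k : ℤ => Y c s (k-1)) atTop (𝓝 (-Real.sqrt (208/3))) := by
      refine (haaeq ▸ Y_tendsto_top c s htend).comp ?_
      exact tendsto_atTop_add_const_right atTop (-1) tendsto_id |>.congr
        (fun k => by simp [sub_eq_add_neg])
    exact h1.prodMk_nhds h2
  · -- atBot
    have haaeq : -aa = -Real.sqrt (208/3) := rfl
    have h1 : Tendsto (fun k : ℤ => Y c s k) atBot (𝓝 (-Real.sqrt (208/3))) :=
      haaeq ▸ Y_tendsto_bot c s htend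
    have h2 : Tendsto (fun k : ℤ => Y c s (k-1)) atBot (𝓝 (-Real.sqrt (208/3))) := by
      refine (haaeq ▸ Y_tendsto_bot c s htend).comp ?_
      exact tendsto_atBot_add_const_right atBot (-1) tendsto_id |>.congr
        (fun k => by simp [sub_eq_add_neg])
    exact h1.prodMk_nhds h2
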